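/- Let Omega be a properly convex domain in P(R^d). If p1, p2, q1, q2 are points of the closure of Omega such that the open segment (p1,p2) is contained in Omega, F_Omega(p1) = F_Omega(q1), and F_Omega(p2) = F_Omega(q2), then the Hausdorff distance with respect to the Hilbert metric between [p1,p2] ∩ Omega and [q1,q2] ∩ Omega is at most max{ d_{F_Omega(p1)}(p1,q1), d_{F_Omega(p2)}(p2,q2) }. -/

import Mathlib

open Set Filter Topology

noncomputable section

/-- The vector space `ℝ^d`. -/
abbrev Vd (d : ℕ) := Fin d → ℝ

/-- Real projective space `P(ℝ^d)`. -/
abbrev Proj (d : ℕ) := Projectivization ℝ (Vd d)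

instance (d : ℕ) : TopologicalSpace (Proj d) :=
  instTopologicalSpaceQuotient (s := projectivizationSetoid ℝ (Vd d))

variable {d : ℕ}

/-- The affine chart associated to a nonzero linear functional `f`: a point `[v]` with
`f v ≠ 0` is sent to the representative `v / f v` in the affine hyperplane `{w : f w = 1}`. -/
def pchart (f : Vd d →ₗ[ℝ] ℝ) (x : Proj d) : Vd d := (f x.rep)⁻¹ • x.rep

/-- `C ⊆ P(ℝ^d)` is properly convex, realized in the affine chart determined by `f`:
its closure lies in the chart, and its image there is a bounded convex set. -/
structure IsPC (f : Vd d →ₗ[ℝ] ℝ) (C : Set (Proj d)) : Prop where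
  chartOK : ∀ x ∈ closure C, f (Projectivization.rep x) ≠ 0
  bounded : Bornology.IsBounded (pchart f '' C)
  convex : Convex ℝ (pchart f '' C)

/-- A properly convex domain: a nonempty open properly convex subset of `P(ℝ^d)`. -/
structure IsPCDomain (f : Vd d →ₗ[ℝ] ℝ) (Ω : Set (Proj d)) : Prop where
  pc : IsPC f Ω
  isOpen : IsOpen Ω
  nonempty : Ω.Nonempty

/-- The open projective segment `(x,y)`, computed in the affine chart of `f`. -/
def poseg (f : Vd d →ₗ[ℝ] ℝ) (x y : Proj d) : Set (Proj d) :=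
  {z | ∃ w ∈ openSegment ℝ (pchart f x) (pchart f y), ∃ hw : w ≠ 0, z = Projectivization.mk ℝ w hw}

/-- The closed projective segment `[x,y]`, computed in the affine chart of `f`. -/
def pcseg (f : Vd d →ₗ[ℝ] ℝ) (x y : Proj d) : Set (Proj d) :=
  {z | ∃ w ∈ segment ℝ (pchart f x) (pchart f y), ∃ hw : w ≠ 0, z = Projectivization.mk ℝ w hw}

/-- Parameters `t` for which `x + t(y - x)` lies in the closure of `K`. -/
def segSet (K : Set (Vd d)) (x y : Vd d) : Set ℝ := {t : ℝ | x + t • (y - x) ∈ closure K}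

/-- Hilbert distance on a bounded convex set `K` in an affine chart, via the cross ratio:
with `s = sSup`, `r = sInf` of the parameter set (so the boundary points are
`a = x + r(y-x)`, `b = x + s(y-x)`, ordered `a,x,y,b`), this is
`(1/2) log ( s(1-r) / ((s-1)(-r)) ) = (1/2) log (|x-b||y-a| / (|x-a||y-b|))`. -/
def affHilbertDist (K : Set (Vd d)) (x y : Vd d) : ℝ :=
  if x = y then 0 else
    (1/2) * Real.log ((sSup (segSet K x y) * (1 - sInf (segSet K x y))) /
      ((sSup (segSet K x y) - 1) * (- sInf (segSet K x y))))

/-- The Hilbert metric of a properly convex set `Ω`, in the chart of `f`. -/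
def hdist (f : Vd d →ₗ[ℝ] ℝ) (Ω : Set (Proj d)) (x y : Proj d) : ℝ :=
  affHilbertDist (pchart f '' Ω) (pchart f x) (pchart f y)

/-- The open face of a point `x` of the closure of an affine convex set `K`:
`x` together with all `y` in the closure such that some open segment contained in the closure
contains both `x` and `y`. -/
def affFace (K : Set (Vd d)) (x : Vd d) : Set (Vd d) :=
  insert x {y ∈ closure K | ∃ a b : Vd d, openSegment ℝ a b ⊆ closure K ∧
      x ∈ openSegment ℝ a b ∧ y ∈ openSegment ℝ a b}

/-- The open face `F_C(x)` of a point `x ∈ closure C`, for `C` properly convex in the chart of `f`. -/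
def pface (f : Vd d →ₗ[ℝ] ℝ) (C : Set (Proj d)) (x : Proj d) : Set (Proj d) :=
  insert x {y ∈ closure C | pchart f y ∈ affFace (pchart f '' C) (pchart f x)}

/-- `F_C(A) = ⋃_{x ∈ A} F_C(x)`. -/
def pfaceSet (f : Vd d →ₗ[ℝ] ℝ) (C : Set (Proj d)) (A : Set (Proj d)) : Set (Proj d) :=
  ⋃ x ∈ A, pface f C x

/-- The Hilbert metric of the open face `F_C(x)` (a properly convex set open in its span). -/
def pfaceDist (f : Vd d →ₗ[ℝ] ℝ) (C : Set (Proj d)) (x : Proj d) (p q : Proj d) : ℝ :=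
  affHilbertDist (pchart f '' pface f C x) (pchart f p) (pchart f q)

/-- The ideal boundary `∂ᵢ C = closure C ∩ ∂Ω` of a subset `C` of a domain `Ω`. -/
def idealBdry (Ω C : Set (Proj d)) : Set (Proj d) := closure C ∩ frontier Ω

/-- Linear automorphisms of `ℝ^d` (inducing projective transformations). -/
abbrev GLd (d : ℕ) := (Vd d) ≃ₗ[ℝ] (Vd d)

/-- The projective action of a linear automorphism. -/
def pact (g : GLd d) (x : Proj d) : Proj d := Projectivization.map g.toLinearMap g.injective x

/-- Orbit of a point under a set of linear automorphisms. -/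
def orbitOf (S : Set (GLd d)) (p : Proj d) : Set (Proj d) := {q | ∃ γ ∈ S, q = pact γ p}

/-- The limit set of a set of automorphisms of `Ω`: all boundary accumulation points of orbits. -/
def limitSetOf (Ω : Set (Proj d)) (S : Set (GLd d)) : Set (Proj d) :=
  frontier Ω ∩ ⋃ p ∈ Ω, closure (orbitOf S p)

/-- The limit set of a subgroup. -/
def limitSet (Ω : Set (Proj d)) (Γ : Subgroup (GLd d)) : Set (Proj d) :=
  limitSetOf Ω {γ : GLd d | γ ∈ Γ}

/-- Open `r`-neighborhood of `A` in `(Ω, hdist)`. -/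
def hnbhd (f : Vd d →ₗ[ℝ] ℝ) (Ω A : Set (Proj d)) (r : ℝ) : Set (Proj d) :=
  {x ∈ Ω | ∃ a ∈ A, hdist f Ω x a < r}

/-- Open metric ball in `(Ω, hdist)`. -/
def hball (f : Vd d →ₗ[ℝ] ℝ) (Ω : Set (Proj d)) (x₀ : Proj d) (r : ℝ) : Set (Proj d) :=
  {y ∈ Ω | hdist f Ω x₀ y < r}

/-- The Hilbert-metric diameter of `A` is at most `D`. -/
def DiamLE (f : Vd d →ₗ[ℝ] ℝ) (Ω A : Set (Proj d)) (D : ℝ) : Prop :=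
  ∀ x ∈ A, ∀ y ∈ A, hdist f Ω x y ≤ D

/-- `X` is unbounded in `(Ω, hdist)`. -/
def HUnbounded (f : Vd d →ₗ[ℝ] ℝ) (Ω X : Set (Proj d)) : Prop := ¬ ∃ D : ℝ, DiamLE f Ω X D

/-- A strongly isolated collection: intersections of `r`-neighborhoods of distinct
members have uniformly bounded diameter. -/
def StronglyIsolated (f : Vd d →ₗ[ℝ] ℝ) (Ω : Set (Proj d)) (𝒳 : Set (Set (Proj d))) : Prop :=
  ∀ r > (0:ℝ), ∃ D > (0:ℝ), ∀ X₁ ∈ 𝒳, ∀ X₂ ∈ 𝒳, X₁ ≠ X₂ →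
    DiamLE f Ω (hnbhd f Ω X₁ r ∩ hnbhd f Ω X₂ r) D

/-- A `Γ`-invariant collection of sets. -/
def GInvariant (Γ : Subgroup (GLd d)) (𝒳 : Set (Set (Proj d))) : Prop :=
  ∀ γ ∈ Γ, ∀ X ∈ 𝒳, pact γ '' X ∈ 𝒳

/-- A naive convex co-compact triple `(Ω, C, Γ)`. -/
structure IsNCC (f : Vd d →ₗ[ℝ] ℝ) (Ω C : Set (Proj d)) (Γ : Subgroup (GLd d)) : Prop where
  dom : IsPCDomain f Ω
  subset : C ⊆ Ω
  nonempty : C.Nonempty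
  closedIn : closure C ∩ Ω ⊆ C
  convex : Convex ℝ (pchart f '' C)
  invΩ : ∀ γ ∈ Γ, pact γ '' Ω = Ω
  invC : ∀ γ ∈ Γ, pact γ '' C = C
  discrete : ∀ K : Set (Proj d), K ⊆ Ω → IsCompact K →
      {γ : GLd d | γ ∈ Γ ∧ (pact γ '' K ∩ K).Nonempty}.Finite
  cocompact : ∃ K : Set (Proj d), K ⊆ C ∧ IsCompact K ∧ ∀ x ∈ C, ∃ γ ∈ Γ, pact γ x ∈ K

/-- `𝒳` is a collection of closed unbounded convex subsets of `C`. -/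
structure IsCUC (f : Vd d →ₗ[ℝ] ℝ) (Ω C : Set (Proj d)) (𝒳 : Set (Set (Proj d))) : Prop where
  sub : ∀ X ∈ 𝒳, X ⊆ C
  closedIn : ∀ X ∈ 𝒳, closure X ∩ Ω ⊆ X
  unbdd : ∀ X ∈ 𝒳, HUnbounded f Ω X
  convex : ∀ X ∈ 𝒳, Convex ℝ (pchart f '' X)

/-- The standard `k`-dimensional projective simplex, with vertices `e_0, …, e_k`. -/
def stdSimplexP (d k : ℕ) : Set (Proj d) :=
  {x : Proj d | ∃ (c : Vd d) (hc : c ≠ 0), (∀ i : Fin d, (i : ℕ) ≤ k → 0 < c i) ∧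
      (∀ i : Fin d, k < (i : ℕ) → c i = 0) ∧ x = Projectivization.mk ℝ c hc}

/-- `S` is a `k`-dimensional projective simplex. -/
def IsSimplex (k : ℕ) (S : Set (Proj d)) : Prop :=
  ∃ g : GLd d, pact g '' stdSimplexP d k = S

/-- `S` is properly embedded in `C` (the inclusion is a proper map). -/
def ProperlyEmbedded (C S : Set (Proj d)) : Prop := S ⊆ C ∧ closure S ∩ C ⊆ S

/-- `𝒳` coarsely contains the properly embedded simplices of `C` of dimension at least two. -/
def CoarselyContainsSimplices (f : Vd d →ₗ[ℝ] ℝ) (Ω C : Set (Proj d))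
    (𝒳 : Set (Set (Proj d))) : Prop :=
  ∃ D > (0:ℝ), ∀ k : ℕ, 2 ≤ k → ∀ S : Set (Proj d), IsSimplex k S → ProperlyEmbedded C S →
    ∃ X ∈ 𝒳, S ⊆ hnbhd f Ω X D

/-- A peripheral family of the naive convex co-compact triple `(Ω, C, Γ)`. -/
def IsPeripheralFamily (f : Vd d →ₗ[ℝ] ℝ) (Ω C : Set (Proj d)) (Γ : Subgroup (GLd d))
    (𝒳 : Set (Set (Proj d))) : Prop :=
  GInvariant Γ 𝒳 ∧ StronglyIsolated f Ω 𝒳 ∧ CoarselyContainsSimplices f Ω C 𝒳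

/-- `Hausdorff distance between A and B (w.r.t. the distance function ρ) is at most M`. -/
def HausdorffLE {α : Type*} (ρ : α → α → ℝ) (A B : Set α) (M : ℝ) : Prop :=
  (∀ a ∈ A, ∀ ε > (0:ℝ), ∃ b ∈ B, ρ a b < M + ε) ∧
  (∀ b ∈ B, ∀ ε > (0:ℝ), ∃ a ∈ A, ρ a b < M + ε)

/-- The closed convex hull of `A ⊆ closure Ω` taken inside `closure Ω`, in the chart of `f`. -/
def projConvHull (f : Vd d →ₗ[ℝ] ℝ) (Ω A : Set (Proj d)) : Set (Proj d) :=
  {z ∈ closure Ω | pchart f z ∈ closure (convexHull ℝ (pchart f '' A))}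

/-- The convex core of `Γ`: the closed convex hull of the limit set, intersected with `Ω`. -/
def pcore (f : Vd d →ₗ[ℝ] ℝ) (Ω : Set (Proj d)) (Γ : Subgroup (GLd d)) : Set (Proj d) :=
  projConvHull f Ω (limitSet Ω Γ) ∩ Ω

/-- `Γ` is a convex co-compact subgroup of `Aut(Ω)`. -/
structure IsCCSubgroup (f : Vd d →ₗ[ℝ] ℝ) (Ω : Set (Proj d)) (Γ : Subgroup (GLd d)) : Prop where
  dom : IsPCDomain f Ω
  invΩ : ∀ γ ∈ Γ, pact γ '' Ω = Ω
  discrete : ∀ K : Set (Proj d), K ⊆ Ω → IsCompact K →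
      {γ : GLd d | γ ∈ Γ ∧ (pact γ '' K ∩ K).Nonempty}.Finite
  coreNonempty : (pcore f Ω Γ).Nonempty
  cocompact : ∃ K : Set (Proj d), K ⊆ pcore f Ω Γ ∧ IsCompact K ∧
      ∀ x ∈ pcore f Ω Γ, ∃ γ ∈ Γ, pact γ x ∈ K

section Stmt3Aux

variable (f : Vd d →ₗ[ℝ] ℝ)

lemma pchart_mk (v : Vd d) (hv : v ≠ 0) (hfv : f v ≠ 0) :
    pchart f (Projectivization.mk ℝ v hv) = (f v)⁻¹ • v := by
  obtain ⟨a, ha⟩ := Projectivization.exists_smul_eq_mk_rep ℝ v hv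
  have ha' : (a : ℝ) ≠ 0 := a.ne_zero
  rw [Units.smul_def] at ha
  unfold pchart
  rw [← ha, map_smul, smul_smul, smul_eq_mul, mul_inv]
  rw [show (a:ℝ)⁻¹ * (f v)⁻¹ * (a:ℝ) = (f v)⁻¹ by field_simp]

lemma pchart_one {x : Proj d} (hx : f x.rep ≠ 0) : f (pchart f x) = 1 := by
  unfold pchart; rw [map_smul, smul_eq_mul]; field_simp

lemma pchart_ne_zero {x : Proj d} (hx : f x.rep ≠ 0) : pchart f x ≠ 0 := by
  intro h
  have := pchart_one f hx
  rw [h] at this; simp at this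

lemma mk_pchart {x : Proj d} (hx : f x.rep ≠ 0) :
    Projectivization.mk ℝ (pchart f x) (pchart_ne_zero f hx) = x := by
  conv_rhs => rw [← x.mk_rep]
  rw [Projectivization.mk_eq_mk_iff']
  exact ⟨(f x.rep)⁻¹, rfl⟩

end Stmt3Aux
section Stmt3Cone

variable (f : Vd d →ₗ[ℝ] ℝ) (Ω : Set (Proj d))

/-- The positive cone over `Ω` in the chart of `f`. -/
def pcone : Set (Vd d) :=
  {v | ∃ h : v ≠ 0, 0 < f v ∧ Projectivization.mk ℝ v h ∈ Ω}

variable {f Ω}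

lemma mk_smul_eq (c : ℝ) (hc : c ≠ 0) (v : Vd d) (hv : v ≠ 0) (h' : c • v ≠ 0) :
    Projectivization.mk ℝ (c • v) h' = Projectivization.mk ℝ v hv :=
  (Projectivization.mk_eq_mk_iff' ℝ _ _ _ _).2 ⟨c, rfl⟩

lemma continuous_f : Continuous f := f.continuous_of_finiteDimensional

lemma mem_pcone_iff (hΩ : IsPCDomain f Ω) {v : Vd d} :
    v ∈ pcone f Ω ↔ 0 < f v ∧ (f v)⁻¹ • v ∈ pchart f '' Ω := by
  constructor
  · rintro ⟨h, hfv, hmem⟩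
    refine ⟨hfv, ⟨Projectivization.mk ℝ v h, hmem, ?_⟩⟩
    rw [pchart_mk f v h hfv.ne']
  · rintro ⟨hfv, w, hwΩ, hw⟩
    have hv : v ≠ 0 := by rintro rfl; simp at hfv
    refine ⟨hv, hfv, ?_⟩
    have hrep : f w.rep ≠ 0 := hΩ.pc.chartOK w (subset_closure hwΩ)
    have h1 : Projectivization.mk ℝ (pchart f w) (pchart_ne_zero f hrep) = w :=
      mk_pchart f hrep
    have h2 : ((f v)⁻¹ • v : Vd d) ≠ 0 := hw ▸ pchart_ne_zero f hrep
    have h3 : Projectivization.mk ℝ ((f v)⁻¹ • v) h2 = Projectivization.mk ℝ v hv :=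
      mk_smul_eq _ (inv_ne_zero hfv.ne') v hv h2
    rw [← h3]
    have : Projectivization.mk ℝ ((f v)⁻¹ • v) h2 = w := by
      rw [← h1]; congr 1; exact hw.symm
    rw [this]; exact hwΩ

lemma pcone_smul_mem {c : ℝ} (hc : 0 < c) {v : Vd d} (hv : v ∈ pcone f Ω) :
    c • v ∈ pcone f Ω := by
  obtain ⟨h, hfv, hmem⟩ := hv
  have h' : c • v ≠ 0 := smul_ne_zero hc.ne' h
  refine ⟨h', by rw [map_smul]; exact mul_pos hc hfv, ?_⟩
  rw [mk_smul_eq c hc.ne' v h h']; exact hmem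

lemma pcone_convex (hΩ : IsPCDomain f Ω) : Convex ℝ (pcone f Ω) := by
  intro v hv w hw a b ha hb hab
  rcases eq_or_lt_of_le ha with rfl | ha'
  · simp only [zero_smul, zero_add] at *
    have : b = 1 := by linarith
    rw [this, one_smul]; exact hw
  rcases eq_or_lt_of_le hb with rfl | hb'
  · simp only [zero_smul, add_zero] at *
    have : a = 1 := by linarith
    rw [this, one_smul]; exact hv
  rw [mem_pcone_iff hΩ] at hv hw ⊢
  obtain ⟨hfv, hvK⟩ := hv
  obtain ⟨hfw, hwK⟩ := hw
  have hS : f (a • v + b • w) = a * f v + b * f w := by simp [map_smul]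
  have hSpos : 0 < a * f v + b * f w := by positivity
  refine ⟨by rw [hS]; exact hSpos, ?_⟩
  have key : (f (a • v + b • w))⁻¹ • (a • v + b • w)
      = (a * f v / (a * f v + b * f w)) • ((f v)⁻¹ • v)
        + (b * f w / (a * f v + b * f w)) • ((f w)⁻¹ • w) := by
    rw [hS]; rw [smul_add]
    rw [smul_smul, smul_smul, smul_smul, smul_smul]
    congr 1
    · congr 1; field_simp
    · congr 1; field_simp
  rw [key]
  exact hΩ.pc.convex hvK hwK (by positivity) (by positivity)
    (by field_simp)

lemma pcone_isOpen (hΩ : IsPCDomain f Ω) : IsOpen (pcone f Ω) := by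
  have hq : IsQuotientMap
      (fun u : {v : Vd d // v ≠ 0} => (Projectivization.mk ℝ u.1 u.2 : Proj d)) :=
    isQuotientMap_quot_mk
  have hA : IsOpen {v : Vd d | ∃ h : v ≠ 0, Projectivization.mk ℝ v h ∈ Ω} := by
    have h1 : IsOpen ((fun u : {v : Vd d // v ≠ 0} => Projectivization.mk ℝ u.1 u.2) ⁻¹' Ω) :=
      hΩ.isOpen.preimage hq.continuous
    have h2 : IsOpen {v : Vd d | v ≠ 0} := isOpen_ne
    have h3 := h2.isOpenMap_subtype_val _ h1
    convert h3 using 1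
    ext v
    constructor
    · rintro ⟨h, hm⟩; exact ⟨⟨v, h⟩, hm, rfl⟩
    · rintro ⟨⟨w, hw⟩, hm, rfl⟩; exact ⟨hw, hm⟩
  have heq : pcone f Ω
      = {v : Vd d | ∃ h : v ≠ 0, Projectivization.mk ℝ v h ∈ Ω} ∩ f ⁻¹' (Set.Ioi 0) := by
    ext v
    constructor
    · rintro ⟨h, h1, h2⟩; exact ⟨⟨h, h2⟩, h1⟩
    · rintro ⟨⟨h, h2⟩, h1⟩; exact ⟨h, h1, h2⟩
  rw [heq]
  exact hA.inter (continuous_f.isOpen_preimage _ isOpen_Ioi)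

lemma pchart_mem_closure_pcone (hΩ : IsPCDomain f Ω) {p : Proj d} (hp : p ∈ closure Ω) :
    pchart f p ∈ closure (pcone f Ω) := by
  have hfp : f p.rep ≠ 0 := hΩ.pc.chartOK p hp
  have hq : IsQuotientMap
      (fun u : {v : Vd d // v ≠ 0} => (Projectivization.mk ℝ u.1 u.2 : Proj d)) :=
    isQuotientMap_quot_mk
  rw [mem_closure_iff]
  intro O hO hPO
  set O' := O ∩ f ⁻¹' (Set.Ioi 0) with hO'def
  have hO' : IsOpen O' := hO.inter (continuous_f.isOpen_preimage _ isOpen_Ioi)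
  have hPO' : pchart f p ∈ O' := ⟨hPO, by simp [pchart_one f hfp]⟩
  set V : Set (Proj d) := {z : Proj d | ∃ v, ∃ h : v ≠ 0, v ∈ O' ∧
      z = Projectivization.mk ℝ v h} with hVdef
  have hV : IsOpen V := by
    rw [← hq.isOpen_preimage]
    have hpre : (fun u : {v : Vd d // v ≠ 0} => Projectivization.mk ℝ u.1 u.2) ⁻¹' V
        = Subtype.val ⁻¹' (⋃ c : ℝˣ, (fun w : Vd d => (c : ℝ) • w) ⁻¹' O') := by
      ext u
      simp only [Set.mem_preimage, Set.mem_iUnion, hVdef, Set.mem_setOf_eq]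
      constructor
      · rintro ⟨v, h, hvO, hmk⟩
        obtain ⟨a, ha⟩ := (Projectivization.mk_eq_mk_iff ℝ v u.1 h u.2).1 hmk.symm
        exact ⟨a, by rw [Units.smul_def] at ha; rw [ha]; exact hvO⟩
      · rintro ⟨c, hc⟩
        refine ⟨(c : ℝ) • u.1, smul_ne_zero c.ne_zero u.2, hc, ?_⟩
        rw [mk_smul_eq (c : ℝ) c.ne_zero u.1 u.2]
    rw [hpre]
    exact (isOpen_iUnion fun c => hO'.preimage (continuous_const_smul _)).preimage
      continuous_subtype_val
  have hpV : p ∈ V := ⟨pchart f p, pchart_ne_zero f hfp, hPO', (mk_pchart f hfp).symm⟩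
  obtain ⟨z, hzV, hzΩ⟩ := mem_closure_iff.1 hp V hV hpV
  obtain ⟨v, h, hvO', rfl⟩ := hzV
  exact ⟨v, hvO'.1, ⟨h, hvO'.2, hzΩ⟩⟩

lemma mk_mem_closure_of_closure_pcone {w : Vd d} (hw : w ∈ closure (pcone f Ω))
    (hw0 : w ≠ 0) : Projectivization.mk ℝ w hw0 ∈ closure Ω := by
  obtain ⟨x, hx, hlim⟩ := mem_closure_iff_seq_limit.1 hw
  have hq : Continuous
      (fun u : {v : Vd d // v ≠ 0} => (Projectivization.mk ℝ u.1 u.2 : Proj d)) :=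
    continuous_quot_mk
  have hsub : Filter.Tendsto (fun n => (⟨x n, (hx n).1⟩ : {v : Vd d // v ≠ 0}))
      Filter.atTop (nhds ⟨w, hw0⟩) := by
    rw [tendsto_subtype_rng]; exact hlim
  have := (hq.tendsto ⟨w, hw0⟩).comp hsub
  refine mem_closure_of_tendsto this (Filter.Eventually.of_forall fun n => ?_)
  exact (hx n).2.2

lemma slice_mem_closure_chart {w : Vd d} (hw : w ∈ closure (pcone f Ω)) (hfw : f w = 1) :
    w ∈ closure (pchart f '' Ω) := by
  obtain ⟨x, hx, hlim⟩ := mem_closure_iff_seq_limit.1 hw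
  have hfx : Filter.Tendsto (fun n => f (x n)) Filter.atTop (nhds 1) := by
    rw [← hfw]; exact (continuous_f.tendsto w).comp hlim
  have hinv : Filter.Tendsto (fun n => (f (x n))⁻¹) Filter.atTop (nhds 1) := by
    have := hfx.inv₀ one_ne_zero
    simpa using this
  have hy : Filter.Tendsto (fun n => (f (x n))⁻¹ • x n) Filter.atTop (nhds w) := by
    have := hinv.smul hlim
    simpa using this
  refine mem_closure_of_tendsto hy (Filter.Eventually.of_forall fun n => ?_)
  obtain ⟨h, h1, h2⟩ := hx n
  exact ⟨Projectivization.mk ℝ (x n) h, h2, by rw [pchart_mk f (x n) h h1.ne']⟩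

lemma chart_subset_pcone (hΩ : IsPCDomain f Ω) : pchart f '' Ω ⊆ pcone f Ω := by
  rintro v ⟨w, hw, rfl⟩
  have hrep : f w.rep ≠ 0 := hΩ.pc.chartOK w (subset_closure hw)
  rw [mem_pcone_iff hΩ]
  rw [pchart_one f hrep]
  simp only [inv_one, one_smul]
  exact ⟨one_pos, ⟨w, hw, rfl⟩⟩

lemma pcone_slice_mem_chart (hΩ : IsPCDomain f Ω) {v : Vd d} (hv : v ∈ pcone f Ω)
    (hfv : f v = 1) : v ∈ pchart f '' Ω := by
  rw [mem_pcone_iff hΩ, hfv] at hv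
  simpa using hv.2

lemma closure_pcone_smul {c : ℝ} (hc : 0 ≤ c) {v : Vd d}
    (hv : v ∈ closure (pcone f Ω)) (hne : (pcone f Ω).Nonempty) :
    c • v ∈ closure (pcone f Ω) := by
  rcases eq_or_lt_of_le hc with rfl | hc'
  · rw [zero_smul]
    obtain ⟨v₀, hv₀⟩ := hne
    have hlim : Filter.Tendsto (fun n : ℕ => (1 / (n + 1) : ℝ) • v₀) Filter.atTop
        (nhds ((0 : ℝ) • v₀)) := by
      exact (tendsto_one_div_add_atTop_nhds_zero_nat.smul_const v₀)
    rw [zero_smul] at hlim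
    refine mem_closure_of_tendsto hlim (Filter.Eventually.of_forall fun n => ?_)
    exact pcone_smul_mem (by positivity) hv₀
  · exact map_mem_closure (continuous_const_smul c) hv fun y hy => pcone_smul_mem hc' hy

lemma closure_pcone_add (hΩ : IsPCDomain f Ω) {v w : Vd d}
    (hv : v ∈ closure (pcone f Ω)) (hw : w ∈ closure (pcone f Ω)) :
    v + w ∈ closure (pcone f Ω) := by
  have hconv : Convex ℝ (closure (pcone f Ω)) := (pcone_convex hΩ).closure
  have hmid : (1/2 : ℝ) • v + (1/2 : ℝ) • w ∈ closure (pcone f Ω) :=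
    hconv hv hw (by norm_num) (by norm_num) (by norm_num)
  have hne : (pcone f Ω).Nonempty := by
    obtain ⟨p, hp⟩ := hΩ.nonempty
    exact ⟨pchart f p, chart_subset_pcone hΩ ⟨p, hp, rfl⟩⟩
  have := closure_pcone_smul (by norm_num : (0:ℝ) ≤ 2) hmid hne
  rw [smul_add, smul_smul, smul_smul] at this
  norm_num at this
  exact this

lemma pcone_add_closure (hΩ : IsPCDomain f Ω) {x v : Vd d}
    (hx : x ∈ pcone f Ω) (hv : v ∈ closure (pcone f Ω)) :
    x + v ∈ pcone f Ω := by
  obtain ⟨ε, hε, hball⟩ := Metric.isOpen_iff.1 (pcone_isOpen hΩ) x hx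
  obtain ⟨v', hv'mem, hv'close⟩ := Metric.mem_closure_iff.1 hv ε hε
  have h1 : x + (v - v') ∈ pcone f Ω := by
    apply hball
    rw [Metric.mem_ball, dist_eq_norm]
    simpa [dist_eq_norm] using hv'close
  have h2 : x + (v - v') + v' ∈ pcone f Ω := by
    have hconv := pcone_convex hΩ
    have hmid := hconv h1 hv'mem (by norm_num : (0:ℝ) ≤ 1/2) (by norm_num : (0:ℝ) ≤ 1/2)
      (by norm_num)
    have := pcone_smul_mem (show (0:ℝ) < 2 by norm_num) hmid
    rw [smul_add, smul_smul, smul_smul] at this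
    norm_num at this
    exact this
  have : x + (v - v') + v' = x + v := by ring
  rwa [this] at h2

end Stmt3Cone
section Stmt3Seg

variable {f : Vd d →ₗ[ℝ] ℝ} {Ω : Set (Proj d)}

lemma mem_segSet_of_pcone {x y : Vd d} (hx : f x = 1) (hy : f y = 1) {t : ℝ}
    (h : x + t • (y - x) ∈ closure (pcone f Ω)) : t ∈ segSet (pchart f '' Ω) x y :=
  slice_mem_closure_chart h (by simp [map_add, map_smul, map_sub, hx, hy])

lemma segSet_subset_Icc (hΩ : IsPCDomain f Ω) {x y : Vd d} (hxy : x ≠ y) :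
    ∃ M : ℝ, segSet (pchart f '' Ω) x y ⊆ Set.Icc (-M) M := by
  obtain ⟨R, hR⟩ := isBounded_iff_forall_norm_le.1 hΩ.pc.bounded.closure
  have hyx : ‖y - x‖ ≠ 0 := by
    simp only [norm_ne_zero_iff, sub_ne_zero]
    exact fun h => hxy h.symm
  have hyx' : 0 < ‖y - x‖ := lt_of_le_of_ne (norm_nonneg _) (Ne.symm hyx)
  refine ⟨(R + ‖x‖) / ‖y - x‖, fun t ht => ?_⟩
  have h1 : ‖x + t • (y - x)‖ ≤ R := hR _ ht
  have h2 : |t| * ‖y - x‖ = ‖t • (y - x)‖ := by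
    rw [norm_smul, Real.norm_eq_abs]
  have h3 : ‖t • (y - x)‖ ≤ R + ‖x‖ := by
    calc ‖t • (y - x)‖ = ‖x + t • (y - x) - x‖ := by congr 1; ring
    _ ≤ ‖x + t • (y - x)‖ + ‖x‖ := norm_sub_le _ _
    _ ≤ R + ‖x‖ := by linarith
  have h4 : |t| ≤ (R + ‖x‖) / ‖y - x‖ := by
    rw [le_div_iff₀ hyx']
    rw [← h2] at h3
    exact h3
  exact abs_le.1 h4

lemma segSet_bddAbove (hΩ : IsPCDomain f Ω) {x y : Vd d} (hxy : x ≠ y) :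
    BddAbove (segSet (pchart f '' Ω) x y) := by
  obtain ⟨M, hM⟩ := segSet_subset_Icc hΩ hxy
  exact (BddAbove.mono hM) (bddAbove_Icc)

lemma segSet_bddBelow (hΩ : IsPCDomain f Ω) {x y : Vd d} (hxy : x ≠ y) :
    BddBelow (segSet (pchart f '' Ω) x y) := by
  obtain ⟨M, hM⟩ := segSet_subset_Icc hΩ hxy
  exact (BddBelow.mono hM) (bddBelow_Icc)

lemma cross_mono {s r s' r' : ℝ} (hs' : 1 < s') (hr' : r' < 0) (hss : s' ≤ s) (hrr : r ≤ r') :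
    s * (1 - r) / ((s - 1) * (-r)) ≤ s' * (1 - r') / ((s' - 1) * (-r')) := by
  have hs : 1 < s := lt_of_lt_of_le hs' hss
  have hr : r < 0 := lt_of_le_of_lt hrr hr'
  have e1 : s * (1 - r) / ((s - 1) * (-r)) = (s / (s - 1)) * ((1 - r) / (-r)) := by
    rw [div_mul_div_comm]
  have e2 : s' * (1 - r') / ((s' - 1) * (-r')) = (s' / (s' - 1)) * ((1 - r') / (-r')) := by
    rw [div_mul_div_comm]
  rw [e1, e2]
  apply mul_le_mul
  · rw [div_le_div_iff₀ (by linarith) (by linarith)]; nlinarith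
  · rw [div_le_div_iff₀ (by linarith) (by linarith)]; nlinarith
  · have h1 : (0:ℝ) < 1 - r := by linarith
    have h2 : (0:ℝ) < -r := by linarith
    positivity
  · have h1 : (0:ℝ) < s' := by linarith
    have h2 : (0:ℝ) < s' - 1 := by linarith
    positivity

lemma cross_pos {s r : ℝ} (hs : 1 < s) (hr : r < 0) :
    0 < s * (1 - r) / ((s - 1) * (-r)) := by
  have h1 : (0:ℝ) < s := by linarith
  have h2 : (0:ℝ) < s - 1 := by linarith
  have h3 : (0:ℝ) < 1 - r := by linarith
  have h4 : (0:ℝ) < -r := by linarith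
  positivity

lemma affHilbertDist_le (hΩ : IsPCDomain f Ω) {x y : Vd d} (hxy : x ≠ y)
    {γs γr : ℝ} (hγs : 1 < γs) (hγr : γr < 0)
    (hms : γs ∈ segSet (pchart f '' Ω) x y) (hmr : γr ∈ segSet (pchart f '' Ω) x y) :
    affHilbertDist (pchart f '' Ω) x y
      ≤ (1/2) * Real.log (γs * (1 - γr) / ((γs - 1) * (-γr))) := by
  rw [affHilbertDist, if_neg hxy]
  set s := sSup (segSet (pchart f '' Ω) x y) with hsdef
  set r := sInf (segSet (pchart f '' Ω) x y) with hrdef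
  have hs : γs ≤ s := le_csSup (segSet_bddAbove hΩ hxy) hms
  have hr : r ≤ γr := csInf_le (segSet_bddBelow hΩ hxy) hmr
  have harg := cross_mono hγs hγr hs hr
  have hpos : 0 < s * (1 - r) / ((s - 1) * (-r)) :=
    cross_pos (lt_of_lt_of_le hγs hs) (lt_of_le_of_lt hr hγr)
  have := Real.log_le_log hpos harg
  linarith

end Stmt3Seg
section Stmt3Main

variable {f : Vd d →ₗ[ℝ] ℝ} {Ω : Set (Proj d)}

lemma convex_comb_pos {A B t : ℝ} (hA : 0 < A) (hB : 0 < B) (ht0 : 0 ≤ t) (ht1 : t ≤ 1) :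
    0 < (1 - t) * A + t * B := by
  rcases le_total A B with h | h <;> nlinarith

lemma affHilbertDist_symm (hΩ : IsPCDomain f Ω) {x y : Vd d}
    (hx : x ∈ closure (pchart f '' Ω)) (hy : y ∈ closure (pchart f '' Ω)) :
    affHilbertDist (pchart f '' Ω) x y = affHilbertDist (pchart f '' Ω) y x := by
  rcases eq_or_ne x y with rfl | hxy
  · rfl
  rw [affHilbertDist, affHilbertDist, if_neg hxy, if_neg (Ne.symm hxy)]
  set S := segSet (pchart f '' Ω) x y with hSdef
  have hS0 : (0:ℝ) ∈ S := by
    simp only [hSdef, segSet, Set.mem_setOf_eq, zero_smul, add_zero]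
    exact hx
  have hne : S.Nonempty := ⟨0, hS0⟩
  have hbA := segSet_bddAbove hΩ hxy
  have hbB := segSet_bddBelow hΩ hxy
  have himg : segSet (pchart f '' Ω) y x = (fun t => 1 - t) '' S := by
    ext t
    simp only [segSet, Set.mem_setOf_eq, Set.mem_image, hSdef]
    constructor
    · intro h
      refine ⟨1 - t, ?_, by ring⟩
      have e : x + (1 - t) • (y - x) = y + t • (x - y) := by module
      rw [e]; exact h
    · rintro ⟨u, hu, rfl⟩
      have e : y + (1 - u) • (x - y) = x + u • (y - x) := by module
      rw [e]; exact hu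
  have hLUB : IsLUB ((fun t => 1 - t) '' S) (1 - sInf S) := by
    constructor
    · rintro c ⟨u, hu, rfl⟩
      have := csInf_le hbB hu
      simp only [Set.mem_setOf_eq]
      linarith
    · intro c hc
      have h2 : ∀ u ∈ S, 1 - c ≤ u := fun u hu => by
        have := hc ⟨u, hu, rfl⟩
        simp only at this
        linarith
      have := le_csInf hne h2
      linarith
  have hGLB : IsGLB ((fun t => 1 - t) '' S) (1 - sSup S) := by
    constructor
    · rintro c ⟨u, hu, rfl⟩
      have := le_csSup hbA hu
      simp only [Set.mem_setOf_eq]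
      linarith
    · intro c hc
      have h2 : ∀ u ∈ S, u ≤ 1 - c := fun u hu => by
        have := hc ⟨u, hu, rfl⟩
        simp only at this
        linarith
      have := csSup_le hne h2
      linarith
  rw [himg, hLUB.csSup_eq (hne.image _), hGLB.csInf_eq (hne.image _)]
  congr 1
  rw [show (1 - (1 - sSup S)) = sSup S by ring, show ((1 - sInf S) - 1) = - sInf S by ring,
    show (-(1 - sSup S)) = sSup S - 1 by ring]
  rw [mul_comm (sSup S) (1 - sInf S), mul_comm (-sInf S) (sSup S - 1)]

set_option maxHeartbeats 1000000 in
lemma main_construction (hΩ : IsPCDomain f Ω)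
    {u₁ u₂ v₁ v₂ : Vd d} {l₁ m₁ l₂ m₂ t : ℝ}
    (hu₁ : f u₁ = 1) (hu₂ : f u₂ = 1) (hv₁ : f v₁ = 1) (hv₂ : f v₂ = 1)
    (hu₁c : u₁ ∈ closure (pcone f Ω)) (hu₂c : u₂ ∈ closure (pcone f Ω))
    (hv₁c : v₁ ∈ closure (pcone f Ω)) (hv₂c : v₂ ∈ closure (pcone f Ω))
    (hl₁ : 1 < l₁) (hm₁ : 1 < m₁) (hl₂ : 1 < l₂) (hm₂ : 1 < m₂)
    (ha₁ : l₁ • v₁ - u₁ ∈ closure (pcone f Ω)) (hb₁ : m₁ • u₁ - v₁ ∈ closure (pcone f Ω))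
    (ha₂ : l₂ • v₂ - u₂ ∈ closure (pcone f Ω)) (hb₂ : m₂ • u₂ - v₂ ∈ closure (pcone f Ω))
    (ht0 : 0 ≤ t) (ht1 : t ≤ 1)
    (hx : (1 - t) • u₁ + t • u₂ ∈ pcone f Ω) :
    ∃ a b : ℝ, 0 ≤ a ∧ 0 ≤ b ∧ a + b = 1 ∧
      a • v₁ + b • v₂ ∈ pcone f Ω ∧
      affHilbertDist (pchart f '' Ω) ((1 - t) • u₁ + t • u₂) (a • v₁ + b • v₂)
        ≤ (1/2) * Real.log (max (l₁ * m₁) (l₂ * m₂)) := by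
  have hne : (pcone f Ω).Nonempty := by
    obtain ⟨p, hp⟩ := hΩ.nonempty
    exact ⟨pchart f p, chart_subset_pcone hΩ ⟨p, hp, rfl⟩⟩
  have hl₁0 : (0:ℝ) < l₁ := by linarith
  have hl₂0 : (0:ℝ) < l₂ := by linarith
  have hm₁0 : (0:ℝ) < m₁ := by linarith
  have hm₂0 : (0:ℝ) < m₂ := by linarith
  set σ₁ := Real.sqrt (l₁ * m₁) with hσ₁def
  set σ₂ := Real.sqrt (l₂ * m₂) with hσ₂def
  have hσ₁sq : σ₁ ^ 2 = l₁ * m₁ := Real.sq_sqrt (by positivity)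
  have hσ₂sq : σ₂ ^ 2 = l₂ * m₂ := Real.sq_sqrt (by positivity)
  have hσ₁pos : 0 < σ₁ := Real.sqrt_pos.2 (by positivity)
  have hσ₂pos : 0 < σ₂ := Real.sqrt_pos.2 (by positivity)
  have hσ₁gt : 1 < σ₁ := by
    rw [hσ₁def]
    exact (Real.lt_sqrt (by norm_num)).2 (by rw [one_pow]; exact one_lt_mul hl₁.le hm₁)
  have hσ₂gt : 1 < σ₂ := by
    rw [hσ₂def]
    exact (Real.lt_sqrt (by norm_num)).2 (by rw [one_pow]; exact one_lt_mul hl₂.le hm₂)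
  set c₁ := σ₁ / l₁ with hc₁def
  set c₂ := σ₂ / l₂ with hc₂def
  have hc₁pos : 0 < c₁ := by positivity
  have hc₂pos : 0 < c₂ := by positivity
  have hc₁l : c₁ * l₁ = σ₁ := by rw [hc₁def]; exact div_mul_cancel₀ _ hl₁0.ne'
  have hc₂l : c₂ * l₂ = σ₂ := by rw [hc₂def]; exact div_mul_cancel₀ _ hl₂0.ne'
  have hc₁m : m₁ / c₁ = σ₁ := by
    rw [hc₁def]
    rw [div_div_eq_mul_div, div_eq_iff hσ₁pos.ne']
    linear_combination -hσ₁sq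
  have hc₂m : m₂ / c₂ = σ₂ := by
    rw [hc₂def]
    rw [div_div_eq_mul_div, div_eq_iff hσ₂pos.ne']
    linear_combination -hσ₂sq
  set s := max σ₁ σ₂ with hsdef
  have hs₁ : σ₁ ≤ s := le_max_left _ _
  have hs₂ : σ₂ ≤ s := le_max_right _ _
  have hspos : 0 < s := lt_of_lt_of_le hσ₁pos hs₁
  set F := (1 - t) / c₁ + t / c₂ with hFdef
  have hFpos : 0 < F := by
    have := convex_comb_pos (by positivity : 0 < 1/c₁) (by positivity : 0 < 1/c₂) ht0 ht1
    rw [hFdef]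
    calc (0:ℝ) < (1-t) * (1/c₁) + t * (1/c₂) := this
    _ = (1 - t)/c₁ + t/c₂ := by ring
  set x := (1 - t) • u₁ + t • u₂ with hxdef
  set y := ((1 - t) / c₁) • v₁ + (t / c₂) • v₂ with hydef
  -- sF > 1
  have hsF : 1 < s * F := by
    have h1 : l₁ ≤ s / c₁ := by
      rw [le_div_iff₀ hc₁pos, mul_comm]
      calc c₁ * l₁ = σ₁ := hc₁l
      _ ≤ s := hs₁
    have h2 : l₂ ≤ s / c₂ := by
      rw [le_div_iff₀ hc₂pos, mul_comm]
      calc c₂ * l₂ = σ₂ := hc₂l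
      _ ≤ s := hs₂
    have key : (1 - t) * l₁ + t * l₂ ≤ s * F := by
      have e : s * F = (1 - t) * (s / c₁) + t * (s / c₂) := by
        rw [hFdef]; field_simp
      rw [e]
      have := mul_le_mul_of_nonneg_left h1 (by linarith : (0:ℝ) ≤ 1 - t)
      have := mul_le_mul_of_nonneg_left h2 ht0
      linarith
    have hcc := convex_comb_pos (by linarith : (0:ℝ) < l₁ - 1) (by linarith : (0:ℝ) < l₂ - 1)
      ht0 ht1
    have e4 : (1 - t) * (l₁ - 1) + t * (l₂ - 1) = (1 - t) * l₁ + t * l₂ - 1 := by ring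
    linarith
  -- s > F
  have hsgtF : F < s := by
    have h1 : 1 / c₁ < σ₁ := by
      rw [div_lt_iff₀ hc₁pos]
      have e : σ₁ * c₁ = m₁ := by
        rw [hc₁def, ← mul_div_assoc, div_eq_iff hl₁0.ne']
        linear_combination hσ₁sq
      linarith
    have h2 : 1 / c₂ < σ₂ := by
      rw [div_lt_iff₀ hc₂pos]
      have e : σ₂ * c₂ = m₂ := by
        rw [hc₂def, ← mul_div_assoc, div_eq_iff hl₂0.ne']
        linear_combination hσ₂sq
      linarith
    have key : F < (1 - t) * σ₁ + t * σ₂ := by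
      have e : F = (1 - t) * (1 / c₁) + t * (1 / c₂) := by rw [hFdef]; ring
      rw [e]
      have hcc := convex_comb_pos (by linarith : (0:ℝ) < σ₁ - 1 / c₁)
        (by linarith : (0:ℝ) < σ₂ - 1 / c₂) ht0 ht1
      have e4 : (1 - t) * (σ₁ - 1 / c₁) + t * (σ₂ - 1 / c₂)
          = ((1 - t) * σ₁ + t * σ₂) - ((1 - t) * (1 / c₁) + t * (1 / c₂)) := by ring
      linarith
    have hfin : (1 - t) * σ₁ + t * σ₂ ≤ s := by
      have h3 := mul_le_mul_of_nonneg_left hs₁ (by linarith : (0:ℝ) ≤ 1 - t)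
      have h4 := mul_le_mul_of_nonneg_left hs₂ ht0
      have e2 : (1 - t) * s + t * s = s := by ring
      linarith
    linarith
  -- claim 1 : s • y - x ∈ closure pcone
  have claim1 : s • y - x ∈ closure (pcone f Ω) := by
    have hterm₁ : (s / c₁) • v₁ - u₁ ∈ closure (pcone f Ω) := by
      have hcoef : 0 ≤ s / c₁ - l₁ := by
        rw [sub_nonneg, le_div_iff₀ hc₁pos, mul_comm]
        rw [hc₁l]; exact hs₁
      have h1 := closure_pcone_smul hcoef hv₁c hne
      have h2 := closure_pcone_add hΩ h1 ha₁
      convert h2 using 1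
      module
    have hterm₂ : (s / c₂) • v₂ - u₂ ∈ closure (pcone f Ω) := by
      have hcoef : 0 ≤ s / c₂ - l₂ := by
        rw [sub_nonneg, le_div_iff₀ hc₂pos, mul_comm]
        rw [hc₂l]; exact hs₂
      have h1 := closure_pcone_smul hcoef hv₂c hne
      have h2 := closure_pcone_add hΩ h1 ha₂
      convert h2 using 1
      module
    have h1 := closure_pcone_smul (by linarith : (0:ℝ) ≤ 1 - t) hterm₁ hne
    have h2 := closure_pcone_smul ht0 hterm₂ hne
    have h3 := closure_pcone_add hΩ h1 h2
    convert h3 using 1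
    rw [hxdef, hydef]
    module
  -- claim 2 : s • x - y ∈ closure pcone
  have claim2 : s • x - y ∈ closure (pcone f Ω) := by
    have hterm₁ : s • u₁ - (1 / c₁) • v₁ ∈ closure (pcone f Ω) := by
      have hcoef : 0 ≤ s - m₁ / c₁ := by rw [sub_nonneg, hc₁m]; exact hs₁
      have h1 := closure_pcone_smul hcoef hu₁c hne
      have h2 := closure_pcone_smul (by positivity : (0:ℝ) ≤ 1 / c₁) hb₁ hne
      have h3 := closure_pcone_add hΩ h1 h2
      convert h3 using 1
      have : (1 / c₁) • (m₁ • u₁ - v₁) = (m₁ / c₁) • u₁ - (1 / c₁) • v₁ := by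
        rw [smul_sub, smul_smul]; congr 2; ring
      rw [this]
      module
    have hterm₂ : s • u₂ - (1 / c₂) • v₂ ∈ closure (pcone f Ω) := by
      have hcoef : 0 ≤ s - m₂ / c₂ := by rw [sub_nonneg, hc₂m]; exact hs₂
      have h1 := closure_pcone_smul hcoef hu₂c hne
      have h2 := closure_pcone_smul (by positivity : (0:ℝ) ≤ 1 / c₂) hb₂ hne
      have h3 := closure_pcone_add hΩ h1 h2
      convert h3 using 1
      have : (1 / c₂) • (m₂ • u₂ - v₂) = (m₂ / c₂) • u₂ - (1 / c₂) • v₂ := by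
        rw [smul_sub, smul_smul]; congr 2; ring
      rw [this]
      module
    have h1 := closure_pcone_smul (by linarith : (0:ℝ) ≤ 1 - t) hterm₁ hne
    have h2 := closure_pcone_smul ht0 hterm₂ hne
    have h3 := closure_pcone_add hΩ h1 h2
    convert h3 using 1
    rw [hxdef, hydef]
    module
  -- y ∈ pcone
  have hymem : y ∈ pcone f Ω := by
    have h1 : s • y ∈ pcone f Ω := by
      have := pcone_add_closure hΩ hx claim1
      convert this using 1
      module
    have := pcone_smul_mem (show (0:ℝ) < s⁻¹ by positivity) h1
    rwa [smul_smul, inv_mul_cancel₀ hspos.ne', one_smul] at this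
  refine ⟨((1 - t) / c₁) / F, (t / c₂) / F,
    div_nonneg (div_nonneg (by linarith) hc₁pos.le) hFpos.le,
    div_nonneg (div_nonneg ht0 hc₂pos.le) hFpos.le, ?_, ?_, ?_⟩
  · rw [← add_div, ← hFdef, div_self hFpos.ne']
  · have hcomb : (((1 - t) / c₁) / F) • v₁ + ((t / c₂) / F) • v₂ = F⁻¹ • y := by
      rw [hydef]; module
    rw [hcomb]
    exact pcone_smul_mem (inv_pos.2 hFpos) hymem
  · -- distance bound
    set w := (((1 - t) / c₁) / F) • v₁ + ((t / c₂) / F) • v₂ with hwdef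
    have hwy : w = F⁻¹ • y := by
      rw [hwdef, hydef]; module
    have hfx : f x = 1 := by
      rw [hxdef]
      simp only [map_add, map_smul, hu₁, hu₂, smul_eq_mul]
      ring
    have hfw : f w = 1 := by
      rw [hwdef]
      simp only [map_add, map_smul, hv₁, hv₂, smul_eq_mul]
      rw [mul_one, mul_one, ← add_div, ← hFdef, div_self hFpos.ne']
    rcases eq_or_ne x w with heq | hxw
    · rw [← heq, affHilbertDist, if_pos rfl]
      have h1 : (1:ℝ) ≤ l₁ * m₁ := by nlinarith
      apply mul_nonneg (by norm_num)
      exact Real.log_nonneg (le_trans h1 (le_max_left _ _))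
    · have hG : (0:ℝ) < s * F - 1 := by linarith
      have hSF : (0:ℝ) < s - F := by linarith
      set γs := s * F / (s * F - 1) with hγsdef
      set γr := -F / (s - F) with hγrdef
      have hγs1 : 1 < γs := by
        rw [hγsdef, lt_div_iff₀ hG]
        linarith
      have hγr0 : γr < 0 := div_neg_of_neg_of_pos (by linarith) hSF
      have hmemS : γs ∈ segSet (pchart f '' Ω) x w := by
        apply mem_segSet_of_pcone hfx hfw
        have h2 := closure_pcone_smul (le_of_lt (inv_pos.2 hG)) claim1 hne
        have e1 : (s * F - 1) • (x + γs • (w - x)) = s • y - x := by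
          rw [hwy, smul_add, smul_smul, hγsdef,
            show (s * F - 1) * (s * F / (s * F - 1)) = s * F from by
              rw [mul_comm]; exact div_mul_cancel₀ _ (ne_of_gt hG)]
          rw [smul_sub, smul_smul,
            show s * F * F⁻¹ = s from by rw [mul_assoc, mul_inv_cancel₀ hFpos.ne', mul_one]]
          module
        have e2 : (s * F - 1) • ((s * F - 1)⁻¹ • (s • y - x)) = s • y - x :=
          smul_inv_smul₀ (ne_of_gt hG) _
        have := smul_right_injective (Vd d) (ne_of_gt hG) (e1.trans e2.symm)
        rw [this]
        exact h2
      have hmemR : γr ∈ segSet (pchart f '' Ω) x w := by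
        apply mem_segSet_of_pcone hfx hfw
        have h2 := closure_pcone_smul (le_of_lt (inv_pos.2 hSF)) claim2 hne
        have e1 : (s - F) • (x + γr • (w - x)) = s • x - y := by
          rw [hwy, smul_add, smul_smul, hγrdef,
            show (s - F) * (-F / (s - F)) = -F from by
              rw [mul_comm]; exact div_mul_cancel₀ _ (ne_of_gt hSF)]
          rw [smul_sub, smul_smul,
            show (-F) * F⁻¹ = -1 from by rw [neg_mul, mul_inv_cancel₀ hFpos.ne']]
          module
        have e2 : (s - F) • ((s - F)⁻¹ • (s • x - y)) = s • x - y :=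
          smul_inv_smul₀ (ne_of_gt hSF) _
        have := smul_right_injective (Vd d) (ne_of_gt hSF) (e1.trans e2.symm)
        rw [this]
        exact h2
      have hle := affHilbertDist_le hΩ hxw hγs1 hγr0 hmemS hmemR
      have harg : γs * (1 - γr) / ((γs - 1) * (-γr)) = s * s := by
        rw [hγsdef, hγrdef]
        field_simp
        ring
      have hss : s * s = max (l₁ * m₁) (l₂ * m₂) := by
        have e₁ : σ₁ * σ₁ = l₁ * m₁ := by linear_combination hσ₁sq
        have e₂ : σ₂ * σ₂ = l₂ * m₂ := by linear_combination hσ₂sq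
        rcases le_total σ₁ σ₂ with h | h
        · have hmul : σ₁ * σ₁ ≤ σ₂ * σ₂ := mul_self_le_mul_self hσ₁pos.le h
          rw [hsdef, max_eq_right h, max_eq_right (by linarith : l₁ * m₁ ≤ l₂ * m₂)]
          exact e₂
        · have hmul : σ₂ * σ₂ ≤ σ₁ * σ₁ := mul_self_le_mul_self hσ₂pos.le h
          rw [hsdef, max_eq_left h, max_eq_left (by linarith : l₂ * m₂ ≤ l₁ * m₁)]
          exact e₁
      rw [harg, hss] at hle
      exact hle

end Stmt3Main
section Stmt3Face

variable {f : Vd d →ₗ[ℝ] ℝ} {Ω : Set (Proj d)}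

lemma pcone_nonempty (hΩ : IsPCDomain f Ω) : (pcone f Ω).Nonempty := by
  obtain ⟨p, hp⟩ := hΩ.nonempty
  exact ⟨pchart f p, chart_subset_pcone hΩ ⟨p, hp, rfl⟩⟩

lemma f_one_on_closure_chart (hΩ : IsPCDomain f Ω) {w : Vd d}
    (hw : w ∈ closure (pchart f '' Ω)) : f w = 1 := by
  have hsub : pchart f '' Ω ⊆ {w : Vd d | f w = 1} := by
    rintro _ ⟨y, hy, rfl⟩
    exact pchart_one f (hΩ.pc.chartOK y (subset_closure hy))
  have hcl : IsClosed {w : Vd d | f w = 1} := isClosed_eq continuous_f continuous_const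
  exact closure_minimal hsub hcl hw

lemma pface_subset_closure {p : Proj d} (hp : p ∈ closure Ω) :
    pface f Ω p ⊆ closure Ω := by
  intro y hy
  rcases hy with rfl | ⟨h, _⟩
  · exact hp
  · exact h

lemma chart_face_subset_cl (hΩ : IsPCDomain f Ω) {p : Proj d} (hp : p ∈ closure Ω) :
    pchart f '' pface f Ω p ⊆ closure (pcone f Ω) := by
  rintro _ ⟨y, hy, rfl⟩
  exact pchart_mem_closure_pcone hΩ (pface_subset_closure hp hy)

lemma f_one_chart_face (hΩ : IsPCDomain f Ω) {p : Proj d} (hp : p ∈ closure Ω) :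
    ∀ w ∈ pchart f '' pface f Ω p, f w = 1 := by
  rintro _ ⟨y, hy, rfl⟩
  exact pchart_one f (hΩ.pc.chartOK y (pface_subset_closure hp hy))

lemma closure_chart_face_subset (hΩ : IsPCDomain f Ω) {p : Proj d} (hp : p ∈ closure Ω) :
    closure (pchart f '' pface f Ω p)
      ⊆ closure (pcone f Ω) ∩ {w : Vd d | f w = 1} := by
  apply closure_minimal
  · intro w hw
    exact ⟨chart_face_subset_cl hΩ hp hw, f_one_chart_face hΩ hp w hw⟩
  · exact isClosed_closure.inter (isClosed_eq continuous_f continuous_const)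

lemma segSet_face_subset (hΩ : IsPCDomain f Ω) {p : Proj d} (hp : p ∈ closure Ω)
    {x y : Vd d} : segSet (pchart f '' pface f Ω p) x y ⊆ segSet (pchart f '' Ω) x y := by
  intro t ht
  have h1 := closure_chart_face_subset hΩ hp ht
  exact slice_mem_closure_chart h1.1 h1.2

lemma face_extract_triv (hΩ : IsPCDomain f Ω) {p q : Proj d}
    (hp : p ∈ closure Ω) (hPQ : pchart f q = pchart f p) {ε : ℝ} (hε : 0 < ε) :
    ∃ lam mu : ℝ, 1 < lam ∧ 1 < mu ∧
      lam • (pchart f q) - pchart f p ∈ closure (pcone f Ω) ∧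
      mu • (pchart f p) - pchart f q ∈ closure (pcone f Ω) ∧
      (1/2) * Real.log (lam * mu) < pfaceDist f Ω p p q + ε := by
  have hexp : 1 < Real.exp (ε/2) := by
    rw [show (1:ℝ) = Real.exp 0 from (Real.exp_zero).symm]
    exact Real.exp_lt_exp.2 (by linarith)
  have hmem : Real.exp (ε/2) • (pchart f q) - pchart f p ∈ closure (pcone f Ω) := by
    rw [hPQ]
    have he : Real.exp (ε/2) • (pchart f p) - pchart f p
        = (Real.exp (ε/2) - 1) • pchart f p := by module
    rw [he]
    exact closure_pcone_smul (by linarith) (pchart_mem_closure_pcone hΩ hp)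
      (pcone_nonempty hΩ)
  have hmem2 : Real.exp (ε/2) • (pchart f p) - pchart f q ∈ closure (pcone f Ω) := by
    rw [hPQ]
    have he : Real.exp (ε/2) • (pchart f p) - pchart f p
        = (Real.exp (ε/2) - 1) • pchart f p := by module
    rw [he]
    exact closure_pcone_smul (by linarith) (pchart_mem_closure_pcone hΩ hp)
      (pcone_nonempty hΩ)
  refine ⟨Real.exp (ε/2), Real.exp (ε/2), hexp, hexp, hmem, hmem2, ?_⟩
  have hD : pfaceDist f Ω p p q = 0 := by
    rw [pfaceDist, affHilbertDist, if_pos hPQ.symm]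
  rw [hD, ← Real.exp_add, show ε/2 + ε/2 = ε from by ring, Real.log_exp]
  linarith

set_option maxHeartbeats 1000000 in
lemma face_extract (hΩ : IsPCDomain f Ω) {p q : Proj d}
    (hp : p ∈ closure Ω) (hq : q ∈ closure Ω)
    (hface : q ∈ pface f Ω p) {ε : ℝ} (hε : 0 < ε) :
    ∃ lam mu : ℝ, 1 < lam ∧ 1 < mu ∧
      lam • (pchart f q) - pchart f p ∈ closure (pcone f Ω) ∧
      mu • (pchart f p) - pchart f q ∈ closure (pcone f Ω) ∧
      (1/2) * Real.log (lam * mu) < pfaceDist f Ω p p q + ε := by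
  have hfp : f p.rep ≠ 0 := hΩ.pc.chartOK p hp
  have hfq : f q.rep ≠ 0 := hΩ.pc.chartOK q hq
  rcases eq_or_ne (pchart f q) (pchart f p) with hPQ | hPQ
  · exact face_extract_triv hΩ hp hPQ hε
  rcases hface with hqp | ⟨hqcl, hqaff⟩
  · exact absurd (congrArg (pchart f) hqp) hPQ
  rcases hqaff with hQP | ⟨hQK, a, b, hsegK, hPmem, hQmem⟩
  · exact absurd hQP hPQ
  -- main case
  set P := pchart f p with hPdef
  set Q := pchart f q with hQdef
  obtain ⟨ua, va, hua, hva, huva, hPe⟩ := hPmem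
  obtain ⟨ub, vb, hub, hvb, huvb, hQe⟩ := hQmem
  have huab : ua ≠ ub := by
    intro h
    apply hPQ
    have hv : va = vb := by linarith
    rw [← hQe, ← hPe, h, hv]
  -- the affine coefficient map
  set u : ℝ → ℝ := fun γ => ua + γ * (ub - ua) with hudef
  have hucont : Continuous u := by
    rw [hudef]; fun_prop
  have hW : ∀ γ : ℝ, P + γ • (Q - P) = (u γ) • a + (1 - u γ) • b := by
    intro γ
    rw [hudef]
    simp only
    rw [← hPe, ← hQe]
    have hva' : va = 1 - ua := by linarith
    have hvb' : vb = 1 - ub := by linarith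
    rw [hva', hvb']
    module
  have hUopen : IsOpen (u ⁻¹' (Set.Ioo 0 1)) := (isOpen_Ioo).preimage hucont
  have hmem1 : (1:ℝ) ∈ u ⁻¹' (Set.Ioo 0 1) := by
    simp only [Set.mem_preimage, hudef, Set.mem_Ioo]
    constructor <;> nlinarith
  have hmem0 : (0:ℝ) ∈ u ⁻¹' (Set.Ioo 0 1) := by
    simp only [Set.mem_preimage, hudef, Set.mem_Ioo]
    constructor <;> nlinarith
  obtain ⟨δ₁, hδ₁, hball₁⟩ := Metric.isOpen_iff.1 hUopen 1 hmem1
  obtain ⟨δ₀, hδ₀, hball₀⟩ := Metric.isOpen_iff.1 hUopen 0 hmem0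
  set γp := 1 + δ₁/2 with hγpdef
  set γm := -(δ₀/2) with hγmdef
  have hγp1 : 1 < γp := by rw [hγpdef]; linarith
  have hγm0 : γm < 0 := by rw [hγmdef]; linarith
  have hγpU : γp ∈ u ⁻¹' (Set.Ioo 0 1) := by
    apply hball₁
    rw [Metric.mem_ball, Real.dist_eq, hγpdef]
    rw [show (1 + δ₁/2 - 1) = δ₁/2 from by ring, abs_of_pos (by linarith)]
    linarith
  have hγmU : γm ∈ u ⁻¹' (Set.Ioo 0 1) := by
    apply hball₀
    rw [Metric.mem_ball, Real.dist_eq, hγmdef]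
    rw [show (-(δ₀/2) - 0) = -(δ₀/2) from by ring, abs_of_neg (by linarith)]
    linarith
  -- membership of the two outer points in the chart image of the face
  have hmemface : ∀ γ : ℝ, γ ∈ u ⁻¹' (Set.Ioo 0 1) →
      γ ∈ segSet (pchart f '' pface f Ω p) P Q := by
    intro γ hγ
    simp only [Set.mem_preimage, Set.mem_Ioo] at hγ
    set W := P + γ • (Q - P) with hWdef
    have hWseg : W ∈ openSegment ℝ a b := by
      refine ⟨u γ, 1 - u γ, hγ.1, by linarith [hγ.2], by ring, ?_⟩
      rw [hWdef, hW γ]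
    have hWK : W ∈ closure (pchart f '' Ω) := hsegK hWseg
    have hfW : f W = 1 := f_one_on_closure_chart hΩ hWK
    have hW0 : W ≠ 0 := by
      intro h
      rw [h] at hfW
      simp at hfW
    have hWcl : W ∈ closure (pcone f Ω) := closure_mono (chart_subset_pcone hΩ) hWK
    have hz : Projectivization.mk ℝ W hW0 ∈ closure Ω :=
      mk_mem_closure_of_closure_pcone hWcl hW0
    have hpz : pchart f (Projectivization.mk ℝ W hW0) = W := by
      rw [pchart_mk f W hW0 (by rw [hfW]; norm_num), hfW]
      simp
    have hzface : Projectivization.mk ℝ W hW0 ∈ pface f Ω p := by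
      right
      refine ⟨hz, ?_⟩
      rw [hpz]
      right
      exact ⟨hWK, a, b, hsegK, ⟨ua, va, hua, hva, huva, hPe⟩, hWseg⟩
    have : W ∈ pchart f '' pface f Ω p := ⟨_, hzface, hpz⟩
    exact subset_closure this
  have hγpT := hmemface γp hγpU
  have hγmT := hmemface γm hγmU
  set T := segSet (pchart f '' pface f Ω p) P Q with hTdef
  have hTsub : T ⊆ segSet (pchart f '' Ω) P Q := segSet_face_subset hΩ hp
  have hPQ' : P ≠ Q := fun h => hPQ h.symm
  have hTbddA : BddAbove T := (segSet_bddAbove hΩ hPQ').mono hTsub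
  have hTbddB : BddBelow T := (segSet_bddBelow hΩ hPQ').mono hTsub
  have hTne : T.Nonempty := ⟨γp, hγpT⟩
  set s₁ := sSup T with hs₁def
  set r₁ := sInf T with hr₁def
  have hs₁gt : 1 < s₁ := lt_of_lt_of_le hγp1 (le_csSup hTbddA hγpT)
  have hr₁lt : r₁ < 0 := lt_of_le_of_lt (csInf_le hTbddB hγmT) hγm0
  -- continuity of the cross-ratio-log
  set g : ℝ × ℝ → ℝ :=
    fun pr => (1/2) * Real.log (pr.1 * (1 - pr.2) / ((pr.1 - 1) * (-pr.2))) with hgdef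
  have hgc : ContinuousAt g (s₁, r₁) := by
    apply ContinuousAt.mul continuousAt_const
    have hden : ((s₁ - 1) * (-r₁)) ≠ 0 := by
      have h1 : (0:ℝ) < s₁ - 1 := by linarith
      have h2 : (0:ℝ) < -r₁ := by linarith
      positivity
    have hratio : ContinuousAt (fun pr : ℝ × ℝ => pr.1 * (1 - pr.2) / ((pr.1 - 1) * (-pr.2)))
        (s₁, r₁) := by
      apply ContinuousAt.div
      · fun_prop
      · fun_prop
      · exact hden
    have hargpos : 0 < s₁ * (1 - r₁) / ((s₁ - 1) * (-r₁)) := cross_pos hs₁gt hr₁lt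
    exact hratio.log (ne_of_gt hargpos)
  obtain ⟨δ, hδ, hδc⟩ := Metric.continuousAt_iff.1 hgc ε hε
  -- choose s' and r'
  have hlb : max ((1 + s₁)/2) (s₁ - δ/2) < s₁ := by
    apply max_lt <;> linarith
  obtain ⟨s', hs'T, hs'gt⟩ := exists_lt_of_lt_csSup hTne hlb
  have hs'le : s' ≤ s₁ := le_csSup hTbddA hs'T
  have hs'1 : 1 < s' := by
    have := le_max_left ((1 + s₁)/2) (s₁ - δ/2)
    linarith
  have hs'δ : |s' - s₁| < δ := by
    have := le_max_right ((1 + s₁)/2) (s₁ - δ/2)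
    rw [abs_of_nonpos (by linarith)]
    linarith
  have hub' : r₁ < min (r₁/2) (r₁ + δ/2) := by
    apply lt_min <;> linarith
  obtain ⟨r', hr'T, hr'lt'⟩ := exists_lt_of_csInf_lt hTne hub'
  have hr'ge : r₁ ≤ r' := csInf_le hTbddB hr'T
  have hr'0 : r' < 0 := by
    have := min_le_left (r₁/2) (r₁ + δ/2)
    linarith
  have hr'δ : |r' - r₁| < δ := by
    have := min_le_right (r₁/2) (r₁ + δ/2)
    rw [abs_of_nonneg (by linarith)]
    linarith
  have hdist : dist ((s', r') : ℝ × ℝ) ((s₁, r₁) : ℝ × ℝ) < δ := by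
    rw [Prod.dist_eq]
    apply max_lt
    · rw [Real.dist_eq]; exact hs'δ
    · rw [Real.dist_eq]; exact hr'δ
  have hgval := hδc hdist
  rw [Real.dist_eq] at hgval
  -- the admissible pair
  set lam := s' / (s' - 1) with hlamdef
  set mu := (1 - r') / (-r') with hmudef
  have hs'1' : (0:ℝ) < s' - 1 := by linarith
  have hr'0' : (0:ℝ) < -r' := by linarith
  have hlam1 : 1 < lam := by
    rw [hlamdef, lt_div_iff₀ hs'1']
    linarith
  have hmu1 : 1 < mu := by
    rw [hmudef, lt_div_iff₀ hr'0']
    linarith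
  -- membership of the chord points in the closure of the cone
  have hchord : ∀ γ ∈ T, P + γ • (Q - P) ∈ closure (pcone f Ω) := by
    intro γ hγ
    have h1 : P + γ • (Q - P) ∈ closure (pchart f '' pface f Ω p) := hγ
    exact (closure_chart_face_subset hΩ hp h1).1
  have hadm1 : lam • Q - P ∈ closure (pcone f Ω) := by
    have h2 := closure_pcone_smul (le_of_lt (inv_pos.2 hs'1')) (hchord s' hs'T)
      (pcone_nonempty hΩ)
    have e1 : (s' - 1) • (lam • Q - P) = P + s' • (Q - P) := by
      rw [hlamdef, smul_sub, smul_smul,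
        show (s' - 1) * (s' / (s' - 1)) = s' from by
          rw [mul_comm]; exact div_mul_cancel₀ _ (ne_of_gt hs'1')]
      module
    have e2 : (s' - 1) • ((s' - 1)⁻¹ • (P + s' • (Q - P))) = P + s' • (Q - P) :=
      smul_inv_smul₀ (ne_of_gt hs'1') _
    have := smul_right_injective (Vd d) (ne_of_gt hs'1') (e1.trans e2.symm)
    rw [this]
    exact h2
  have hadm2 : mu • P - Q ∈ closure (pcone f Ω) := by
    have h2 := closure_pcone_smul (le_of_lt (inv_pos.2 hr'0')) (hchord r' hr'T)
      (pcone_nonempty hΩ)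
    have e1 : (-r') • (mu • P - Q) = P + r' • (Q - P) := by
      rw [hmudef, smul_sub, smul_smul,
        show (-r') * ((1 - r') / (-r')) = 1 - r' from by
          rw [mul_comm]; exact div_mul_cancel₀ _ (ne_of_gt hr'0')]
      module
    have e2 : (-r') • ((-r')⁻¹ • (P + r' • (Q - P))) = P + r' • (Q - P) :=
      smul_inv_smul₀ (ne_of_gt hr'0') _
    have := smul_right_injective (Vd d) (ne_of_gt hr'0') (e1.trans e2.symm)
    rw [this]
    exact h2
  refine ⟨lam, mu, hlam1, hmu1, hadm1, hadm2, ?_⟩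
  -- the value bound
  have hval : (1/2) * Real.log (lam * mu) = g (s', r') := by
    rw [hgdef, hlamdef, hmudef]
    simp only
    rw [div_mul_div_comm]
  have hDval : pfaceDist f Ω p p q = g (s₁, r₁) := by
    rw [pfaceDist, affHilbertDist, if_neg hPQ', hgdef]
  rw [hval, hDval]
  have := abs_lt.1 hgval
  linarith [this.2]

end Stmt3Face
section Stmt3Assemble

variable {f : Vd d →ₗ[ℝ] ℝ} {Ω : Set (Proj d)}

lemma pchart_mk_of_one {w : Vd d} (hw : f w = 1) (h0 : w ≠ 0) :
    pchart f (Projectivization.mk ℝ w h0) = w := by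
  rw [pchart_mk f w h0 (by rw [hw]; norm_num), hw]
  simp

lemma half_log_max_lt {l₁ m₁ l₂ m₂ D₁ D₂ ε : ℝ}
    (h₁ : (1/2) * Real.log (l₁ * m₁) < D₁ + ε)
    (h₂ : (1/2) * Real.log (l₂ * m₂) < D₂ + ε) :
    (1/2) * Real.log (max (l₁ * m₁) (l₂ * m₂)) < max D₁ D₂ + ε := by
  rcases max_cases (l₁ * m₁) (l₂ * m₂) with ⟨hc, _⟩ | ⟨hc, _⟩
  · rw [hc]
    have := le_max_left D₁ D₂
    linarith
  · rw [hc]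
    have := le_max_right D₁ D₂
    linarith

end Stmt3Assemble

/-- Hausdorff distance bound between `[p₁,p₂] ∩ Ω` and `[q₁,q₂] ∩ Ω`
when `(p₁,p₂) ⊆ Ω`, `F_Ω(p₁) = F_Ω(q₁)` and `F_Ω(p₂) = F_Ω(q₂)`. -/
theorem stmt_3 {d : ℕ} (f : Vd d →ₗ[ℝ] ℝ) (Ω : Set (Proj d)) (hΩ : IsPCDomain f Ω)
    (p₁ p₂ q₁ q₂ : Proj d)
    (hp₁ : p₁ ∈ closure Ω) (hp₂ : p₂ ∈ closure Ω)
    (hq₁ : q₁ ∈ closure Ω) (hq₂ : q₂ ∈ closure Ω)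
    (hseg : poseg f p₁ p₂ ⊆ Ω)
    (hf₁ : pface f Ω p₁ = pface f Ω q₁) (hf₂ : pface f Ω p₂ = pface f Ω q₂) :
    HausdorffLE (hdist f Ω) (pcseg f p₁ p₂ ∩ Ω) (pcseg f q₁ q₂ ∩ Ω)
      (max (pfaceDist f Ω p₁ p₁ q₁) (pfaceDist f Ω p₂ p₂ q₂)) := by
  have hfu₁ : f (pchart f p₁) = 1 := pchart_one f (hΩ.pc.chartOK p₁ hp₁)
  have hfu₂ : f (pchart f p₂) = 1 := pchart_one f (hΩ.pc.chartOK p₂ hp₂)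
  have hfv₁ : f (pchart f q₁) = 1 := pchart_one f (hΩ.pc.chartOK q₁ hq₁)
  have hfv₂ : f (pchart f q₂) = 1 := pchart_one f (hΩ.pc.chartOK q₂ hq₂)
  have hu₁c : pchart f p₁ ∈ closure (pcone f Ω) := pchart_mem_closure_pcone hΩ hp₁
  have hu₂c : pchart f p₂ ∈ closure (pcone f Ω) := pchart_mem_closure_pcone hΩ hp₂
  have hv₁c : pchart f q₁ ∈ closure (pcone f Ω) := pchart_mem_closure_pcone hΩ hq₁
  have hv₂c : pchart f q₂ ∈ closure (pcone f Ω) := pchart_mem_closure_pcone hΩ hq₂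
  have hface₁ : q₁ ∈ pface f Ω p₁ := by rw [hf₁]; exact Set.mem_insert _ _
  have hface₂ : q₂ ∈ pface f Ω p₂ := by rw [hf₂]; exact Set.mem_insert _ _
  constructor
  · -- forward direction
    rintro z ⟨⟨w, hwseg, hw0, rfl⟩, hzΩ⟩ ε hε
    obtain ⟨l₁, m₁, hl₁, hm₁, ha₁, hb₁, hval₁⟩ := face_extract hΩ hp₁ hq₁ hface₁ hε
    obtain ⟨l₂, m₂, hl₂, hm₂, ha₂, hb₂, hval₂⟩ := face_extract hΩ hp₂ hq₂ hface₂ hε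
    obtain ⟨t₁, t₂, ht₁, ht₂, hsum, hwe⟩ := hwseg
    have hfw : f w = 1 := by
      rw [← hwe]
      simp only [map_add, map_smul, smul_eq_mul, hfu₁, hfu₂, mul_one]
      linarith
    have hchart : pchart f (Projectivization.mk ℝ w hw0) = w := pchart_mk_of_one hfw hw0
    have hwpc : w ∈ pcone f Ω := by
      have h1 : pchart f (Projectivization.mk ℝ w hw0) ∈ pchart f '' Ω := ⟨_, hzΩ, rfl⟩
      rw [hchart] at h1
      exact chart_subset_pcone hΩ h1
    have hwe' : w = (1 - t₂) • pchart f p₁ + t₂ • pchart f p₂ := by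
      rw [← hwe, show t₁ = 1 - t₂ from by linarith]
    obtain ⟨a, b, hA, hB, hab, hmem, hdle⟩ := main_construction hΩ hfu₁ hfu₂ hfv₁ hfv₂
      hu₁c hu₂c hv₁c hv₂c hl₁ hm₁ hl₂ hm₂ ha₁ hb₁ ha₂ hb₂ ht₂ (by linarith)
      (by rw [← hwe']; exact hwpc)
    have hfwq : f (a • pchart f q₁ + b • pchart f q₂) = 1 := by
      simp only [map_add, map_smul, smul_eq_mul, hfv₁, hfv₂, mul_one]
      linarith
    have hwq0 : a • pchart f q₁ + b • pchart f q₂ ≠ 0 := by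
      intro h
      rw [h] at hfwq
      simp at hfwq
    obtain ⟨hh, _, hmk⟩ := hmem
    refine ⟨Projectivization.mk ℝ _ hwq0,
      ⟨⟨_, ⟨a, b, hA, hB, hab, rfl⟩, hwq0, rfl⟩, hmk⟩, ?_⟩
    have hchartq : pchart f (Projectivization.mk ℝ _ hwq0) = a • pchart f q₁ + b • pchart f q₂ :=
      pchart_mk_of_one hfwq hwq0
    show hdist f Ω _ _ < _
    rw [hdist, hchart, hchartq, hwe']
    exact lt_of_le_of_lt hdle (half_log_max_lt hval₁ hval₂)
  · -- reverse direction
    rintro z ⟨⟨w, hwseg, hw0, rfl⟩, hzΩ⟩ ε hε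
    obtain ⟨l₁, m₁, hl₁, hm₁, ha₁, hb₁, hval₁⟩ := face_extract hΩ hp₁ hq₁ hface₁ hε
    obtain ⟨l₂, m₂, hl₂, hm₂, ha₂, hb₂, hval₂⟩ := face_extract hΩ hp₂ hq₂ hface₂ hε
    obtain ⟨t₁, t₂, ht₁, ht₂, hsum, hwe⟩ := hwseg
    have hfw : f w = 1 := by
      rw [← hwe]
      simp only [map_add, map_smul, smul_eq_mul, hfv₁, hfv₂, mul_one]
      linarith
    have hchart : pchart f (Projectivization.mk ℝ w hw0) = w := pchart_mk_of_one hfw hw0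
    have hwpc : w ∈ pcone f Ω := by
      have h1 : pchart f (Projectivization.mk ℝ w hw0) ∈ pchart f '' Ω := ⟨_, hzΩ, rfl⟩
      rw [hchart] at h1
      exact chart_subset_pcone hΩ h1
    have hwe' : w = (1 - t₂) • pchart f q₁ + t₂ • pchart f q₂ := by
      rw [← hwe, show t₁ = 1 - t₂ from by linarith]
    obtain ⟨a, b, hA, hB, hab, hmem, hdle⟩ := main_construction hΩ hfv₁ hfv₂ hfu₁ hfu₂
      hv₁c hv₂c hu₁c hu₂c hm₁ hl₁ hm₂ hl₂ hb₁ ha₁ hb₂ ha₂ ht₂ (by linarith)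
      (by rw [← hwe']; exact hwpc)
    have hfwq : f (a • pchart f p₁ + b • pchart f p₂) = 1 := by
      simp only [map_add, map_smul, smul_eq_mul, hfu₁, hfu₂, mul_one]
      linarith
    have hwq0 : a • pchart f p₁ + b • pchart f p₂ ≠ 0 := by
      intro h
      rw [h] at hfwq
      simp at hfwq
    obtain ⟨hh, -, hmk⟩ := id hmem
    refine ⟨Projectivization.mk ℝ _ hwq0,
      ⟨⟨_, ⟨a, b, hA, hB, hab, rfl⟩, hwq0, rfl⟩, hmk⟩, ?_⟩
    have hchartq : pchart f (Projectivization.mk ℝ _ hwq0) = a • pchart f p₁ + b • pchart f p₂ :=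
      pchart_mk_of_one hfwq hwq0
    show hdist f Ω _ _ < _
    rw [hdist, hchart, hchartq]
    have hsymm : affHilbertDist (pchart f '' Ω) (a • pchart f p₁ + b • pchart f p₂) w
        = affHilbertDist (pchart f '' Ω) w (a • pchart f p₁ + b • pchart f p₂) := by
      apply affHilbertDist_symm hΩ
      · exact subset_closure (pcone_slice_mem_chart hΩ hmem hfwq)
      · exact subset_closure (pcone_slice_mem_chart hΩ hwpc hfw)
    rw [hsymm, hwe']
    refine lt_of_le_of_lt hdle ?_
    have e : max (m₁ * l₁) (m₂ * l₂) = max (l₁ * m₁) (l₂ * m₂) := by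
      rw [mul_comm m₁ l₁, mul_comm m₂ l₂]
    rw [e]
    exact half_log_max_lt hval₁ hval₂
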